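/- Let B and D be orthogonal projections on C^N with D̄ = I − D. If ‖B D̄‖₂ = 1, then there exists a nonzero vector w with B w = w and D w = 0; consequently no linear operator R can satisfy R D x = x for all x in range(B). -/

import Mathlib

open Matrix
noncomputable section

/-- Spectral (ℓ²) operator norm of a complex matrix. -/
def opN {m n : Type*} [Fintype m] [Fintype n] [DecidableEq n] (A : Matrix m n ℂ) : ℝ :=
  ‖(Matrix.toEuclideanLin A).toContinuousLinearMap‖

/-- Pythagoras-type identity for symmetric idempotents. -/
lemma proj_pyth {N : ℕ} {S : EuclideanSpace ℂ (Fin N) →ₗ[ℂ] EuclideanSpace ℂ (Fin N)}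
    (hsym : S.IsSymmetric) (hid : ∀ x, S (S x) = S x) (x : EuclideanSpace ℂ (Fin N)) :
    ‖x - S x‖ ^ 2 = ‖x‖ ^ 2 - ‖S x‖ ^ 2 := by
  have key : (inner ℂ x (S x) : ℂ) = inner ℂ (S x) (S x) := by
    rw [hsym x (S x), hid]
  have hre : RCLike.re (inner ℂ x (S x) : ℂ) = ‖S x‖ ^ 2 := by
    rw [key, inner_self_eq_norm_sq]
  have hexp := @norm_sub_sq ℂ _ _ _ _ x (S x)
  rw [hexp, hre]; ring

lemma proj_norm_le {N : ℕ} {S : EuclideanSpace ℂ (Fin N) →ₗ[ℂ] EuclideanSpace ℂ (Fin N)}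
    (hsym : S.IsSymmetric) (hid : ∀ x, S (S x) = S x) (x : EuclideanSpace ℂ (Fin N)) :
    ‖S x‖ ≤ ‖x‖ := by
  have h1 := proj_pyth hsym hid x
  have h2 : (0:ℝ) ≤ ‖x - S x‖ ^ 2 := sq_nonneg _
  nlinarith [norm_nonneg (S x), norm_nonneg x]

lemma proj_norm_eq {N : ℕ} {S : EuclideanSpace ℂ (Fin N) →ₗ[ℂ] EuclideanSpace ℂ (Fin N)}
    (hsym : S.IsSymmetric) (hid : ∀ x, S (S x) = S x) (x : EuclideanSpace ℂ (Fin N))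
    (heq : ‖S x‖ = ‖x‖) : S x = x := by
  have h1 := proj_pyth hsym hid x
  rw [heq, sub_self] at h1
  have : x - S x = 0 := by
    have := pow_eq_zero_iff (n := 2) (by norm_num) |>.mp h1
    simpa [norm_eq_zero] using this
  exact (sub_eq_zero.mp this).symm

lemma attain {N : ℕ} [Nontrivial (EuclideanSpace ℂ (Fin N))]
    (T : EuclideanSpace ℂ (Fin N) →L[ℂ] EuclideanSpace ℂ (Fin N)) :
    ∃ x : EuclideanSpace ℂ (Fin N), ‖x‖ = 1 ∧ ‖T x‖ = ‖T‖ := by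
  obtain ⟨y, hy⟩ := exists_ne (0 : EuclideanSpace ℂ (Fin N))
  have hsne : (Metric.sphere (0 : EuclideanSpace ℂ (Fin N)) 1).Nonempty := by
    refine ⟨‖y‖⁻¹ • y, ?_⟩
    simp [norm_smul, norm_ne_zero_iff.mpr hy, inv_mul_cancel₀ (norm_ne_zero_iff.mpr hy)]
  have hcomp : IsCompact (Metric.sphere (0 : EuclideanSpace ℂ (Fin N)) 1) :=
    isCompact_sphere _ _
  have hcont : ContinuousOn (fun x => ‖T x‖) (Metric.sphere (0:EuclideanSpace ℂ (Fin N)) 1) :=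
    (T.continuous.norm).continuousOn
  obtain ⟨x, hxs, hmax⟩ := hcomp.exists_isMaxOn hsne hcont
  have hx1 : ‖x‖ = 1 := by simpa using hxs
  refine ⟨x, hx1, le_antisymm (by simpa [hx1] using T.le_opNorm x) ?_⟩
  refine T.opNorm_le_bound (norm_nonneg _) fun z => ?_
  rcases eq_or_ne z 0 with rfl | hz
  · simp
  · have hzn : ‖z‖ ≠ 0 := norm_ne_zero_iff.mpr hz
    have hu : (‖z‖⁻¹ • z) ∈ Metric.sphere (0:EuclideanSpace ℂ (Fin N)) 1 := by
      simp [norm_smul, inv_mul_cancel₀ hzn]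
    have := hmax hu
    have h2 : ‖z‖⁻¹ * ‖T z‖ ≤ ‖T x‖ := by
      simpa [T.map_smul, norm_smul] using this
    calc ‖T z‖ = ‖z‖ * (‖z‖⁻¹ * ‖T z‖) := by field_simp
    _ ≤ ‖z‖ * ‖T x‖ := by
        exact mul_le_mul_of_nonneg_left h2 (norm_nonneg _)
    _ = ‖T x‖ * ‖z‖ := mul_comm _ _

/-- Converse of the sampling theorem: if `‖B(I - D)‖₂ = 1` there is a nonzero
bandlimited vector vanishing on the sampling set, so no linear reconstruction
operator recovers every bandlimited signal from its samples. -/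
theorem stmt3 {N : ℕ} (B D : Matrix (Fin N) (Fin N) ℂ)
    (hB1 : B.IsHermitian) (hB2 : B * B = B)
    (hD1 : D.IsHermitian) (hD2 : D * D = D)
    (h : opN (B * (1 - D)) = 1) :
    (∃ w : Fin N → ℂ, w ≠ 0 ∧ B.mulVec w = w ∧ D.mulVec w = 0) ∧
      ¬ ∃ R : Matrix (Fin N) (Fin N) ℂ,
          ∀ x : Fin N → ℂ, B.mulVec x = x → R.mulVec (D.mulVec x) = x := by
  set T := (Matrix.toEuclideanLin (B * (1 - D))).toContinuousLinearMap with hT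
  have hTnorm : ‖T‖ = 1 := h
  rcases Nat.eq_zero_or_pos N with hN | hN
  · exfalso
    subst hN
    have : ‖T‖ ≤ 0 := T.opNorm_le_bound le_rfl fun x => by
      simp [Subsingleton.elim x 0]
    linarith
  · haveI : Nonempty (Fin N) := ⟨⟨0, hN⟩⟩
    haveI : Nontrivial (EuclideanSpace ℂ (Fin N)) := by
      refine ⟨(WithLp.equiv 2 (Fin N → ℂ)).symm (fun _ => 1), 0, ?_⟩
      intro hc
      have : (1 : ℂ) = 0 := congrFun (congrArg (WithLp.equiv 2 (Fin N → ℂ)) hc) ⟨0, hN⟩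
      exact one_ne_zero this
    obtain ⟨x, hx1, hxT⟩ := attain T
    rw [hTnorm] at hxT
    set Bl := Matrix.toEuclideanLin B with hBl
    set Ql := Matrix.toEuclideanLin (1 - D) with hQl
    have symB : Bl.IsSymmetric := Matrix.isHermitian_iff_isSymmetric.mp hB1
    have hQherm : (1 - D).IsHermitian := Matrix.isHermitian_one.sub hD1
    have symQ : Ql.IsSymmetric := Matrix.isHermitian_iff_isSymmetric.mp hQherm
    have hQ2 : (1 - D) * (1 - D) = 1 - D := by
      rw [mul_sub, mul_one]
      rw [sub_mul, one_mul, hD2]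
      abel
    have idB : ∀ y, Bl (Bl y) = Bl y := fun y => by
      simp only [hBl, Matrix.toEuclideanLin_apply, Equiv.apply_symm_apply,
        Matrix.mulVec_mulVec, hB2]
    have idQ : ∀ y, Ql (Ql y) = Ql y := fun y => by
      simp only [hQl, Matrix.toEuclideanLin_apply, Equiv.apply_symm_apply,
        Matrix.mulVec_mulVec, hQ2]
    have hTx : ‖Bl (Ql x)‖ = 1 := by
      have : T x = Bl (Ql x) := by
        rw [hT, LinearMap.coe_toContinuousLinearMap']
        simp only [hBl, hQl, Matrix.toEuclideanLin_apply, Equiv.apply_symm_apply,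
          Matrix.mulVec_mulVec]
      rw [← this, hxT]
    have hQle : ‖Ql x‖ ≤ 1 := hx1 ▸ proj_norm_le symQ idQ x
    have hBQle : ‖Bl (Ql x)‖ ≤ ‖Ql x‖ := proj_norm_le symB idB (Ql x)
    have hQeq : ‖Ql x‖ = 1 := le_antisymm hQle (hTx ▸ hBQle)
    have hQx : Ql x = x := proj_norm_eq symQ idQ x (by rw [hQeq, hx1])
    have hBx : Bl x = x := by
      have h1 : ‖Bl x‖ = ‖x‖ := by rw [← hQx, hTx, hQx, hx1]
      exact proj_norm_eq symB idB x h1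
    set w : Fin N → ℂ := WithLp.equiv 2 (Fin N → ℂ) x with hw
    have hwne : w ≠ 0 := by
      intro hc
      have : x = 0 := by
        have := congrArg (WithLp.equiv 2 (Fin N → ℂ)).symm hc
        simpa [hw] using this
      rw [this] at hx1; simp at hx1
    have hBw : B.mulVec w = w := by
      have := congrArg (WithLp.equiv 2 (Fin N → ℂ)) hBx
      exact this
    have hQw : (1 - D).mulVec w = w := by
      have := congrArg (WithLp.equiv 2 (Fin N → ℂ)) hQx
      exact this
    have hDw : D.mulVec w = 0 := by
      rw [Matrix.sub_mulVec, Matrix.one_mulVec] at hQw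
      exact sub_eq_self.mp hQw
    refine ⟨⟨w, hwne, hBw, hDw⟩, ?_⟩
    rintro ⟨R, hR⟩
    have := hR w hBw
    rw [hDw, Matrix.mulVec_zero] at this
    exact hwne this.symm
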